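/- Let n ≥ 1, λ ∈ ℂ^n, and let A be the diagonal n×n complex matrix with diagonal entries λ_1, …, λ_n. Let c, d : ((Fin n → ℕ) × ℤ) → ℂ be finitely supported, and define H(y,t) = Σ_{(l,k)} c(l,k) (∏_s y_s^{l_s}) e^{i k t} and W(y,t) = Σ_{(l,k)} d(l,k) (∏_s y_s^{l_s}) e^{i k t} for y ∈ ℂ^n, t ∈ ℝ. Assume that W is resonant, i.e. d(l,k) = 0 whenever i k + ⟨l,λ⟩ ≠ 0, and that ∂_t H(y,t) + (D_y H(y,t))(A y) = W(y,t) for all (y,t). Then H is resonant, i.e. c(l,k) = 0 whenever i k + ⟨l,λ⟩ ≠ 0, where ⟨l,λ⟩ = Σ_s l_s λ_s. -/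

import Mathlib

open Complex Finset


noncomputable def chr (k : ℤ) : Multiplicative ℝ →* ℂ where
  toFun t := Complex.exp (Complex.I * (k : ℂ) * ((Multiplicative.toAdd t : ℝ) : ℂ))
  map_one' := by simp
  map_mul' a b := by
    simp only [toAdd_mul, Complex.ofReal_add, ← Complex.exp_add]
    ring_nf

lemma chr_apply (k : ℤ) (t : ℝ) :
    chr k (Multiplicative.ofAdd t) = Complex.exp (Complex.I * (k : ℂ) * (t : ℂ)) := rfl

lemma chr_inj : Function.Injective chr := by
  intro k k' h
  have h1 : Complex.exp (Complex.I * (k : ℂ) * (1:ℝ)) =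
      Complex.exp (Complex.I * (k' : ℂ) * (1:ℝ)) := by
    have := DFunLike.congr_fun h (Multiplicative.ofAdd (1:ℝ))
    simpa [chr_apply] using this
  rw [Complex.exp_eq_exp_iff_exists_int] at h1
  obtain ⟨m, hm⟩ := h1
  have h2 : Complex.I * (k : ℂ) = Complex.I * ((k' : ℂ) + m * (2 * Real.pi)) := by
    push_cast at hm ⊢
    linear_combination hm
  have h3 : (k : ℂ) = (k' : ℂ) + m * (2 * Real.pi) :=
    mul_left_cancel₀ Complex.I_ne_zero h2
  have h4 : (k : ℝ) = (k' : ℝ) + m * (2 * Real.pi) := by exact_mod_cast h3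
  have hm0 : m = 0 := by
    by_contra hm0
    have hq : ((((k : ℚ) - k') / (2 * m) : ℚ) : ℝ) = Real.pi := by
      push_cast
      field_simp
      linarith [h4]
    exact irrational_pi ⟨_, hq⟩
  subst hm0
  simp at h4
  exact_mod_cast h4

lemma chr_li : LinearIndependent ℂ (fun k : ℤ => ⇑(chr k)) :=
  (linearIndependent_monoidHom (Multiplicative ℝ) ℂ).comp chr chr_inj

lemma pseudo_indep {n : ℕ} (S : Finset ((Fin n → ℕ) × ℤ)) (f : ((Fin n → ℕ) × ℤ) → ℂ)
    (h : ∀ (y : Fin n → ℂ) (t : ℝ),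
      ∑ p ∈ S, f p * (∏ s, y s ^ p.1 s) * Complex.exp (Complex.I * (p.2 : ℂ) * (t : ℂ)) = 0) :
    ∀ p ∈ S, f p = 0 := by
  classical
  set K := S.image Prod.snd with hK
  have hg : ∀ (y : Fin n → ℂ), ∀ k ∈ K,
      ∑ p ∈ S.filter (fun q => q.2 = k), f p * ∏ s, y s ^ p.1 s = 0 := by
    intro y k hk
    refine linearIndependent_iff'.mp chr_li K
      (fun k => ∑ p ∈ S.filter (fun q => q.2 = k), f p * ∏ s, y s ^ p.1 s) ?_ k hk
    funext t
    have key : ∑ k ∈ K, (∑ p ∈ S.filter (fun q => q.2 = k), f p * ∏ s, y s ^ p.1 s)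
        * Complex.exp (Complex.I * (k : ℂ) * ((Multiplicative.toAdd t : ℝ) : ℂ)) = 0 := by
      rw [← h y (Multiplicative.toAdd t)]
      rw [← Finset.sum_fiberwise_of_maps_to (g := Prod.snd) (t := K)
        (fun p hp => Finset.mem_image_of_mem _ hp)]
      refine Finset.sum_congr rfl fun k _ => ?_
      rw [Finset.sum_mul]
      refine Finset.sum_congr rfl fun p hp => ?_
      rw [(Finset.mem_filter.mp hp).2]
    simp; exact key
  intro p hp
  obtain ⟨l, k⟩ := p
  have hk : k ∈ K := Finset.mem_image_of_mem _ hp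
  set Sk := S.filter (fun q => q.2 = k) with hSk
  set P : MvPolynomial (Fin n) ℂ :=
    ∑ p ∈ Sk, MvPolynomial.monomial (Finsupp.equivFunOnFinite.symm p.1) (f p) with hPdef
  have hP : P = 0 := by
    apply MvPolynomial.funext
    intro y
    rw [hPdef, map_sum, map_zero]
    have : ∀ p ∈ Sk, MvPolynomial.eval y
        (MvPolynomial.monomial (Finsupp.equivFunOnFinite.symm p.1) (f p))
        = f p * ∏ s, y s ^ p.1 s := by
      intro p _
      rw [MvPolynomial.eval_monomial]
      congr 1
      rw [Finsupp.prod_pow]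
      simp
    rw [Finset.sum_congr rfl this]
    exact hg y k hk
  have hc := congrArg (MvPolynomial.coeff (Finsupp.equivFunOnFinite.symm l)) hP
  rw [hPdef, MvPolynomial.coeff_sum, MvPolynomial.coeff_zero] at hc
  rw [Finset.sum_eq_single (l, k)] at hc
  · simpa [MvPolynomial.coeff_monomial] using hc
  · intro q hq hne
    rw [MvPolynomial.coeff_monomial, if_neg]
    intro heq
    apply hne
    have h1 : q.1 = l := Finsupp.equivFunOnFinite.symm.injective heq
    have h2 : q.2 = k := (Finset.mem_filter.mp hq).2
    exact Prod.ext h1 h2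
  · intro hnot
    have : (l, k) ∈ Sk := Finset.mem_filter.mpr ⟨hp, rfl⟩
    exact absurd this hnot

lemma prod_deriv_apply {n : ℕ} (l : Fin n → ℕ) (y lam : Fin n → ℂ) :
    ∑ s, (∏ j ∈ Finset.univ.erase s, y j ^ l j) *
        (((l s : ℂ) * y s ^ (l s - 1)) * (lam s * y s))
      = (∑ s, (l s : ℂ) * lam s) * ∏ s, y s ^ l s := by
  rw [Finset.sum_mul]
  refine Finset.sum_congr rfl fun s _ => ?_
  rcases Nat.eq_zero_or_pos (l s) with h | h
  · simp [h]
  · have hy : y s ^ (l s - 1) * y s = y s ^ l s := by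
      rw [← pow_succ, Nat.sub_add_cancel h]
    have hprod : (∏ j ∈ Finset.univ.erase s, y j ^ l j) * y s ^ l s = ∏ j, y j ^ l j :=
      Finset.prod_erase_mul _ _ (Finset.mem_univ s)
    rw [← hprod, ← hy]
    ring

lemma hasDeriv_sum {n : ℕ} (S : Finset ((Fin n → ℕ) × ℤ)) (f : ((Fin n → ℕ) × ℤ) → ℂ)
    (y : Fin n → ℂ) (t : ℝ) :
    HasDerivAt (fun τ : ℝ => ∑ p ∈ S, f p * (∏ s, y s ^ p.1 s)
        * Complex.exp (Complex.I * (p.2 : ℂ) * (τ : ℂ)))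
      (∑ p ∈ S, f p * (∏ s, y s ^ p.1 s) * (Complex.I * (p.2 : ℂ)
        * Complex.exp (Complex.I * (p.2 : ℂ) * (t : ℂ)))) t := by
  apply HasDerivAt.fun_sum
  intro p _
  have h1 : HasDerivAt (fun τ : ℝ => (τ : ℂ)) 1 t := by
    simpa using (hasDerivAt_id t).ofReal_comp
  have h2 := HasDerivAt.const_mul (Complex.I * (p.2 : ℂ)) h1
  have h3 := h2.cexp
  have h4 := HasDerivAt.const_mul (f p * ∏ s, y s ^ p.1 s) h3
  exact h4.congr_deriv (by ring)

lemma hasFDeriv_sum {n : ℕ} (S : Finset ((Fin n → ℕ) × ℤ)) (f : ((Fin n → ℕ) × ℤ) → ℂ)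
    (t : ℝ) (y : Fin n → ℂ) :
    HasFDerivAt (fun z : Fin n → ℂ => ∑ p ∈ S, f p * (∏ s, z s ^ p.1 s)
        * Complex.exp (Complex.I * (p.2 : ℂ) * (t : ℂ)))
      (∑ p ∈ S, (f p * Complex.exp (Complex.I * (p.2 : ℂ) * (t : ℂ))) •
        (∑ s, (∏ j ∈ Finset.univ.erase s, y j ^ p.1 j) •
          (((p.1 s : ℂ) * y s ^ (p.1 s - 1)) •
            (ContinuousLinearMap.proj s : (Fin n → ℂ) →L[ℂ] ℂ)))) y := by
  apply HasFDerivAt.fun_sum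
  intro p _
  have hfac : ∀ s : Fin n, HasFDerivAt (fun z : Fin n → ℂ => z s ^ p.1 s)
      (((p.1 s : ℂ) * y s ^ (p.1 s - 1)) •
        (ContinuousLinearMap.proj s : (Fin n → ℂ) →L[ℂ] ℂ)) y := by
    intro s
    have hpow := hasDerivAt_pow (p.1 s) (y s)
    exact hpow.comp_hasFDerivAt y
      (ContinuousLinearMap.proj s : (Fin n → ℂ) →L[ℂ] ℂ).hasFDerivAt
  have hprod := HasFDerivAt.finset_prod (u := Finset.univ) (fun s _ => hfac s)
  have h2 := (hprod.const_mul (f p)).mul_const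
    (Complex.exp (Complex.I * (p.2 : ℂ) * (t : ℂ)))
  exact h2.congr_fderiv (by rw [smul_smul, mul_comm])



/-- Inductive step of Lemma 2.3(b): if `L̃ H = W` with
`L̃ = ∂_t + ⟨∂_y ·, Ay⟩` (`A = diag λ`), where `H` and `W` are finite sums of
pseudomonomials and `W` is resonant, then `H` is resonant. -/
theorem stmt_7 {n : ℕ} (hn : 1 ≤ n) (lam : Fin n → ℂ)
    (A : Matrix (Fin n) (Fin n) ℂ) (hA : A = Matrix.diagonal lam)
    (c d : ((Fin n → ℕ) × ℤ) →₀ ℂ)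
    (H W : (Fin n → ℂ) → ℝ → ℂ)
    (hH : ∀ (y : Fin n → ℂ) (t : ℝ),
      H y t = c.sum fun p a =>
        a * (∏ s, y s ^ p.1 s) * Complex.exp (Complex.I * (p.2 : ℂ) * (t : ℂ)))
    (hW : ∀ (y : Fin n → ℂ) (t : ℝ),
      W y t = d.sum fun p a =>
        a * (∏ s, y s ^ p.1 s) * Complex.exp (Complex.I * (p.2 : ℂ) * (t : ℂ)))
    (hWres : ∀ (l : Fin n → ℕ) (k : ℤ),
      Complex.I * (k : ℂ) + ∑ s, (l s : ℂ) * lam s ≠ 0 → d (l, k) = 0)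
    (hPDE : ∀ (y : Fin n → ℂ) (t : ℝ),
      deriv (fun τ : ℝ => H y τ) t
        + (fderiv ℂ (fun z => H z t) y) (A.mulVec y) = W y t) :
    ∀ (l : Fin n → ℕ) (k : ℤ),
      Complex.I * (k : ℂ) + ∑ s, (l s : ℂ) * lam s ≠ 0 → c (l, k) = 0 := by

  classical
  set S : Finset ((Fin n → ℕ) × ℤ) := c.support ∪ d.support with hS
  have main : ∀ (y : Fin n → ℂ) (t : ℝ),
      ∑ p ∈ S, (c p * (Complex.I * (p.2 : ℂ) + ∑ s, (p.1 s : ℂ) * lam s) - d p)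
        * (∏ s, y s ^ p.1 s) * Complex.exp (Complex.I * (p.2 : ℂ) * (t : ℂ)) = 0 := by
    intro y t
    have hfun1 : (fun τ : ℝ => H y τ) = fun τ : ℝ =>
        ∑ p ∈ c.support, c p * (∏ s, y s ^ p.1 s)
          * Complex.exp (Complex.I * (p.2 : ℂ) * (τ : ℂ)) := by
      funext τ; rw [hH]; rfl
    have hd1 : deriv (fun τ : ℝ => H y τ) t
        = ∑ p ∈ c.support, c p * (∏ s, y s ^ p.1 s)
          * (Complex.I * (p.2 : ℂ) * Complex.exp (Complex.I * (p.2 : ℂ) * (t : ℂ))) := by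
      rw [hfun1]; exact (hasDeriv_sum _ _ y t).deriv
    have hfun2 : (fun z : Fin n → ℂ => H z t) = fun z : Fin n → ℂ =>
        ∑ p ∈ c.support, c p * (∏ s, z s ^ p.1 s)
          * Complex.exp (Complex.I * (p.2 : ℂ) * (t : ℂ)) := by
      funext z; rw [hH]; rfl
    have hd2 : fderiv ℂ (fun z => H z t) y
        = ∑ p ∈ c.support, (c p * Complex.exp (Complex.I * (p.2 : ℂ) * (t : ℂ))) •
          (∑ s, (∏ j ∈ Finset.univ.erase s, y j ^ p.1 j) •
            (((p.1 s : ℂ) * y s ^ (p.1 s - 1)) •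
              (ContinuousLinearMap.proj s : (Fin n → ℂ) →L[ℂ] ℂ))) := by
      rw [hfun2]; exact (hasFDeriv_sum _ _ t y).fderiv
    have hv : A.mulVec y = fun s => lam s * y s := by
      funext s; rw [hA]; simp [Matrix.mulVec_diagonal]
    have happ : (fderiv ℂ (fun z => H z t) y) (A.mulVec y)
        = ∑ p ∈ c.support, c p * (∑ s, (p.1 s : ℂ) * lam s) * (∏ s, y s ^ p.1 s)
            * Complex.exp (Complex.I * (p.2 : ℂ) * (t : ℂ)) := by
      rw [hd2, hv, ContinuousLinearMap.sum_apply]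
      refine Finset.sum_congr rfl fun p _ => ?_
      simp only [ContinuousLinearMap.smul_apply, ContinuousLinearMap.sum_apply,
        ContinuousLinearMap.proj_apply, smul_eq_mul]
      rw [prod_deriv_apply p.1 y lam]
      ring
    have hpde := hPDE y t
    rw [hd1, happ, hW, Finsupp.sum] at hpde
    have hcomb : ∑ p ∈ c.support,
        (c p * (Complex.I * (p.2 : ℂ) + ∑ s, (p.1 s : ℂ) * lam s))
          * (∏ s, y s ^ p.1 s) * Complex.exp (Complex.I * (p.2 : ℂ) * (t : ℂ))
        = ∑ p ∈ d.support, d p * (∏ s, y s ^ p.1 s)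
          * Complex.exp (Complex.I * (p.2 : ℂ) * (t : ℂ)) := by
      rw [← hpde, ← Finset.sum_add_distrib]
      refine Finset.sum_congr rfl fun p _ => ?_
      ring
    have hc' : ∑ p ∈ S, (c p * (Complex.I * (p.2 : ℂ) + ∑ s, (p.1 s : ℂ) * lam s))
          * (∏ s, y s ^ p.1 s) * Complex.exp (Complex.I * (p.2 : ℂ) * (t : ℂ))
        = ∑ p ∈ c.support, (c p * (Complex.I * (p.2 : ℂ) + ∑ s, (p.1 s : ℂ) * lam s))
          * (∏ s, y s ^ p.1 s) * Complex.exp (Complex.I * (p.2 : ℂ) * (t : ℂ)) := by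
      refine (Finset.sum_subset Finset.subset_union_left fun p _ hp => ?_).symm
      rw [Finsupp.notMem_support_iff.mp hp]
      ring
    have hd' : ∑ p ∈ S, d p * (∏ s, y s ^ p.1 s)
          * Complex.exp (Complex.I * (p.2 : ℂ) * (t : ℂ))
        = ∑ p ∈ d.support, d p * (∏ s, y s ^ p.1 s)
          * Complex.exp (Complex.I * (p.2 : ℂ) * (t : ℂ)) := by
      refine (Finset.sum_subset Finset.subset_union_right fun p _ hp => ?_).symm
      rw [Finsupp.notMem_support_iff.mp hp]
      ring
    have hsplit : ∑ p ∈ S,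
        (c p * (Complex.I * (p.2 : ℂ) + ∑ s, (p.1 s : ℂ) * lam s) - d p)
          * (∏ s, y s ^ p.1 s) * Complex.exp (Complex.I * (p.2 : ℂ) * (t : ℂ))
        = (∑ p ∈ S, (c p * (Complex.I * (p.2 : ℂ) + ∑ s, (p.1 s : ℂ) * lam s))
            * (∏ s, y s ^ p.1 s) * Complex.exp (Complex.I * (p.2 : ℂ) * (t : ℂ)))
          - ∑ p ∈ S, d p * (∏ s, y s ^ p.1 s)
            * Complex.exp (Complex.I * (p.2 : ℂ) * (t : ℂ)) := by
      rw [← Finset.sum_sub_distrib]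
      refine Finset.sum_congr rfl fun p _ => ?_
      ring
    rw [hsplit, hc', hd', hcomb, sub_self]
  intro l k hres
  by_cases hmem : (l, k) ∈ S
  · have h0 := pseudo_indep S _ main (l, k) hmem
    have hd0 : d (l, k) = 0 := hWres l k hres
    rw [hd0, sub_zero] at h0
    exact (mul_eq_zero.mp h0).resolve_right hres
  · have hc0 : (l, k) ∉ c.support := fun hc => hmem (Finset.mem_union_left _ hc)
    exact Finsupp.notMem_support_iff.mp hc0
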